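/- Let r : ℝ → ℝ be bounded and measurable and let N ≥ 1. Define A^b = { α > 0 : the Gaussian objective J^b_α has no stationary point } and A^m = { α > 0 : the N-component mixture objective J^m_α has no stationary point }. Then A^m ⊆ A^b; consequently, if A^m is nonempty then inf A^m ≥ inf A^b. -/

import Mathlib

open MeasureTheory Real

/-- Gaussian density `φ(a; μ, σ) = (2πσ²)^(−1/2) · exp(−(a−μ)²/(2σ²))`. -/
noncomputable def gpdf (μ σ a : ℝ) : ℝ :=
  (Real.sqrt (2 * Real.pi * σ ^ 2))⁻¹ * Real.exp (-((a - μ) ^ 2) / (2 * σ ^ 2))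

/-- Entropy-regularized bandit objective under the Gaussian parameterization:
`J^b_α(μ, σ) = ∫ (r(a) − α·log φ(a; μ, σ)) · φ(a; μ, σ) da`. -/
noncomputable def Jb (r : ℝ → ℝ) (α μ σ : ℝ) : ℝ :=
  ∫ a, (r a - α * Real.log (gpdf μ σ a)) * gpdf μ σ a

/-- Softmax weights `w_k = exp(η_k) / Σ_j exp(η_j)`. -/
noncomputable def softmaxW {N : ℕ} (η : Fin N → ℝ) (k : Fin N) : ℝ :=
  Real.exp (η k) / ∑ j, Real.exp (η j)

/-- Mixture density with softmax weights:
`m(a) = Σ_k w_k · φ(a; μ_k, σ_k)`. -/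
noncomputable def mixDensity {N : ℕ} (μs σs η : Fin N → ℝ) (a : ℝ) : ℝ :=
  ∑ k, softmaxW η k * gpdf (μs k) (σs k) a

/-- Entropy-regularized bandit objective under the `N`-component mixture
parameterization. -/
noncomputable def Jm (r : ℝ → ℝ) (α : ℝ) {N : ℕ} (μs σs η : Fin N → ℝ) : ℝ :=
  ∫ a, (r a - α * Real.log (mixDensity μs σs η a)) * mixDensity μs σs η a

/-- `(μ, σ)` (with `σ > 0`) is a stationary point of `J^b_α`: both partial
derivatives exist and vanish. -/
def IsStatB (r : ℝ → ℝ) (α μ σ : ℝ) : Prop :=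
  0 < σ ∧
  (DifferentiableAt ℝ (fun x => Jb r α x σ) μ ∧ deriv (fun x => Jb r α x σ) μ = 0) ∧
  (DifferentiableAt ℝ (fun x => Jb r α μ x) σ ∧ deriv (fun x => Jb r α μ x) σ = 0)

/-- `(μs, σs, η)` (with all `σs k > 0`) is a stationary point of `J^m_α`: all
`3N` partial derivatives exist and vanish. -/
def IsStatM (r : ℝ → ℝ) (α : ℝ) {N : ℕ} (μs σs η : Fin N → ℝ) : Prop :=
  (∀ k, 0 < σs k) ∧
  ∀ k : Fin N,
    (DifferentiableAt ℝ (fun x => Jm r α (Function.update μs k x) σs η) (μs k) ∧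
      deriv (fun x => Jm r α (Function.update μs k x) σs η) (μs k) = 0) ∧
    (DifferentiableAt ℝ (fun x => Jm r α μs (Function.update σs k x) η) (σs k) ∧
      deriv (fun x => Jm r α μs (Function.update σs k x) η) (σs k) = 0) ∧
    (DifferentiableAt ℝ (fun x => Jm r α μs σs (Function.update η k x)) (η k) ∧
      deriv (fun x => Jm r α μs σs (Function.update η k x)) (η k) = 0)

lemma gpdf_pos {σ : ℝ} (hσ : 0 < σ) (μ a : ℝ) : 0 < gpdf μ σ a := by
  unfold gpdf
  have h : 0 < 2 * Real.pi * σ ^ 2 := by positivity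
  positivity

lemma measurable_gpdf (μ σ : ℝ) : Measurable (gpdf μ σ) := by
  unfold gpdf; fun_prop


/-- key polynomial-vs-exponential bound -/
lemma polyExp {β C₁ C₂ D₁ D₂ : ℝ} (t : ℝ) (hβ : 0 < β) (h1 : 0 ≤ C₁) (h2 : 0 ≤ C₂)
    (h3 : 0 ≤ D₁) (h4 : 0 ≤ D₂) :
    (C₁ + C₂ * t ^ 2) * (D₁ + D₂ * t ^ 2) ≤
      (C₁ * D₁ + (C₁ * D₂ + C₂ * D₁) * (2 / β) + C₂ * D₂ * (16 / β ^ 2)) *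
        Real.exp (β / 2 * t ^ 2) := by
  set x := β / 2 * t ^ 2 with hxdef
  have hx : 0 ≤ x := by positivity
  have hE1 : 1 ≤ Real.exp x := Real.one_le_exp hx
  have hEx : x ≤ Real.exp x := (le_add_of_nonneg_right zero_le_one).trans (by
    linarith [Real.add_one_le_exp x])
  have hEx2 : x ^ 2 ≤ 4 * Real.exp x := by
    have h := Real.add_one_le_exp (x / 2)
    have hsq : Real.exp x = Real.exp (x / 2) * Real.exp (x / 2) := by
      rw [← Real.exp_add]; ring_nf
    nlinarith [Real.exp_pos (x / 2)]
  have ht2 : t ^ 2 ≤ 2 / β * Real.exp x := by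
    rw [hxdef] at hEx
    rw [div_mul_eq_mul_div, le_div_iff₀ hβ]
    nlinarith
  have ht4 : t ^ 4 ≤ 16 / β ^ 2 * Real.exp x := by
    have : (β / 2 * t ^ 2) ^ 2 ≤ 4 * Real.exp x := hEx2
    rw [div_mul_eq_mul_div, le_div_iff₀ (by positivity : (0:ℝ) < β ^ 2)]
    nlinarith
  have k1 : C₁ * D₁ ≤ C₁ * D₁ * Real.exp x := by nlinarith [mul_nonneg h1 h3]
  have k2 : (C₁ * D₂ + C₂ * D₁) * t ^ 2 ≤ (C₁ * D₂ + C₂ * D₁) * (2 / β * Real.exp x) :=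
    mul_le_mul_of_nonneg_left ht2 (by positivity)
  have k3 : C₂ * D₂ * t ^ 4 ≤ C₂ * D₂ * (16 / β ^ 2 * Real.exp x) :=
    mul_le_mul_of_nonneg_left ht4 (by positivity)
  nlinarith [k1, k2, k3]

lemma core (r : ℝ → ℝ) (hr : Measurable r) {C : ℝ} (hbd : ∀ a, |r a| ≤ C) (α : ℝ)
    (m m' : ℝ → ℝ → ℝ) (x₀ ctr ε M L γ β D₁ D₂ : ℝ) (hε : 0 < ε)
    (hM : 0 < M) (hL : 0 < L) (hγ : 0 < γ) (hβ : 0 < β) (hD₁ : 0 ≤ D₁) (hD₂ : 0 ≤ D₂)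
    (hm_meas : ∀ x, Measurable fun a => m x a)
    (hm'_meas : Measurable fun a => m' x₀ a)
    (hm_le : ∀ x ∈ Metric.ball x₀ ε, ∀ a, m x a ≤ M * Real.exp (-(β * (a - ctr) ^ 2)))
    (hm_ge : ∀ x ∈ Metric.ball x₀ ε, ∀ a, L * Real.exp (-(γ * (a - ctr) ^ 2)) ≤ m x a)
    (hm'_le : ∀ x ∈ Metric.ball x₀ ε, ∀ a,
      |m' x a| ≤ (D₁ + D₂ * (a - ctr) ^ 2) * Real.exp (-(β * (a - ctr) ^ 2)))
    (hm_deriv : ∀ a, ∀ x ∈ Metric.ball x₀ ε, HasDerivAt (fun y => m y a) (m' x a) x) :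
    HasDerivAt (fun x => ∫ a, (r a - α * Real.log (m x a)) * m x a)
      (∫ a, (r a - α * Real.log (m x₀ a) - α) * m' x₀ a) x₀ := by
  have hC : 0 ≤ C := (abs_nonneg (r 0)).trans (hbd 0)
  set A : ℝ := |Real.log M| + |Real.log L| with hA
  set C₁ : ℝ := C + |α| + |α| + |α| * A with hC₁def
  set C₂ : ℝ := |α| * γ with hC₂def
  have hAnn : 0 ≤ A := by positivity
  have hC₁ : 0 ≤ C₁ := by positivity
  have hC₂ : 0 ≤ C₂ := by positivity
  -- positivity of m on the ball
  have hm_pos : ∀ x ∈ Metric.ball x₀ ε, ∀ a, 0 < m x a := fun x hx a =>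
    lt_of_lt_of_le (by positivity) (hm_ge x hx a)
  -- bound on the "reward minus log" factor
  have hlogabs : ∀ x ∈ Metric.ball x₀ ε, ∀ a,
      |Real.log (m x a)| ≤ A + γ * (a - ctr) ^ 2 := by
    intro x hx a
    have hpos := hm_pos x hx a
    have hup : m x a ≤ M := by
      have h1 := hm_le x hx a
      have h2 : Real.exp (-(β * (a - ctr) ^ 2)) ≤ 1 :=
        Real.exp_le_one_iff.mpr (neg_nonpos.mpr (by positivity))
      nlinarith
    have hlogup : Real.log (m x a) ≤ Real.log M := Real.log_le_log hpos hup
    have hlogdn : Real.log L - γ * (a - ctr) ^ 2 ≤ Real.log (m x a) := by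
      have h1 := Real.log_le_log (by positivity) (hm_ge x hx a)
      rwa [Real.log_mul (ne_of_gt hL) (Real.exp_ne_zero _), Real.log_exp] at h1
    rw [abs_le, hA]
    have h1 := le_abs_self (Real.log M)
    have h2 := neg_abs_le (Real.log L)
    have h3 : (0:ℝ) ≤ γ * (a - ctr) ^ 2 := by positivity
    have h4 := abs_nonneg (Real.log M)
    have h5 := abs_nonneg (Real.log L)
    constructor <;> linarith
  have hlogbd : ∀ x ∈ Metric.ball x₀ ε, ∀ a,
      |r a - α * Real.log (m x a) - α| ≤ C₁ + C₂ * (a - ctr) ^ 2 := by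
    intro x hx a
    have h6 : |α * Real.log (m x a)| ≤ |α| * (A + γ * (a - ctr) ^ 2) := by
      rw [abs_mul]
      exact mul_le_mul_of_nonneg_left (hlogabs x hx a) (abs_nonneg α)
    obtain ⟨h6a, h6b⟩ := abs_le.mp h6
    obtain ⟨h7a, h7b⟩ := abs_le.mp (hbd a)
    have h8a := neg_abs_le α
    have h8b := le_abs_self α
    rw [abs_le, hC₁def, hC₂def]
    constructor <;> nlinarith
  have hlogbd0 : ∀ a, |r a - α * Real.log (m x₀ a)| ≤ C₁ + C₂ * (a - ctr) ^ 2 := by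
    intro a
    have hx₀ : x₀ ∈ Metric.ball x₀ ε := Metric.mem_ball_self hε
    have h6 : |α * Real.log (m x₀ a)| ≤ |α| * (A + γ * (a - ctr) ^ 2) := by
      rw [abs_mul]
      exact mul_le_mul_of_nonneg_left (hlogabs x₀ hx₀ a) (abs_nonneg α)
    obtain ⟨h6a, h6b⟩ := abs_le.mp h6
    obtain ⟨h7a, h7b⟩ := abs_le.mp (hbd a)
    have h8a := neg_abs_le α
    have h8b := le_abs_self α
    rw [abs_le, hC₁def, hC₂def]
    constructor <;> nlinarith
  -- dominating bound constants
  set K : ℝ := C₁ * D₁ + (C₁ * D₂ + C₂ * D₁) * (2 / β) + C₂ * D₂ * (16 / β ^ 2) with hKdef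
  set K₂ : ℝ := C₁ * M + (C₁ * 0 + C₂ * M) * (2 / β) + C₂ * 0 * (16 / β ^ 2) with hK₂def
  have hexpsplit : ∀ t : ℝ, Real.exp (β / 2 * t ^ 2) * Real.exp (-(β * t ^ 2)) =
      Real.exp (-(β / 2) * t ^ 2) := by
    intro t; rw [← Real.exp_add]; ring_nf
  have hFmeas : ∀ x : ℝ, AEStronglyMeasurable
      (fun a => (r a - α * Real.log (m x a)) * m x a) volume := fun x =>
    ((hr.sub ((Real.measurable_log.comp (hm_meas x)).const_mul α)).mul
      (hm_meas x)).aestronglyMeasurable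
  have hF'meas : AEStronglyMeasurable
      (fun a => (r a - α * Real.log (m x₀ a) - α) * m' x₀ a) volume :=
    (((hr.sub ((Real.measurable_log.comp (hm_meas x₀)).const_mul α)).sub
      measurable_const).mul hm'_meas).aestronglyMeasurable
  have hx₀ : x₀ ∈ Metric.ball x₀ ε := Metric.mem_ball_self hε
  -- integrability of F x₀
  have hbnd2_int : Integrable (fun a => K₂ * Real.exp (-(β / 2) * (a - ctr) ^ 2)) volume :=
    ((integrable_exp_neg_mul_sq (half_pos hβ)).comp_sub_right ctr).const_mul K₂
  have hFint : Integrable (fun a => (r a - α * Real.log (m x₀ a)) * m x₀ a) volume := by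
    refine Integrable.mono' hbnd2_int (hFmeas x₀) (Filter.Eventually.of_forall fun a => ?_)
    set t := a - ctr with ht
    have h1 := hlogbd0 a
    have h2 : |m x₀ a| ≤ (M + 0 * t ^ 2) * Real.exp (-(β * t ^ 2)) := by
      rw [abs_of_pos (hm_pos x₀ hx₀ a), zero_mul, add_zero]
      exact hm_le x₀ hx₀ a
    have h3 := polyExp (β := β) (C₁ := C₁) (C₂ := C₂) (D₁ := M) (D₂ := 0) t hβ hC₁ hC₂
      (le_of_lt hM) le_rfl
    rw [Real.norm_eq_abs, abs_mul]
    calc |r a - α * Real.log (m x₀ a)| * |m x₀ a|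
        ≤ (C₁ + C₂ * t ^ 2) * ((M + 0 * t ^ 2) * Real.exp (-(β * t ^ 2))) :=
          mul_le_mul h1 h2 (abs_nonneg _) (by positivity)
      _ = (C₁ + C₂ * t ^ 2) * (M + 0 * t ^ 2) * Real.exp (-(β * t ^ 2)) := by ring
      _ ≤ K₂ * Real.exp (β / 2 * t ^ 2) * Real.exp (-(β * t ^ 2)) := by
          have := Real.exp_pos (-(β * t ^ 2))
          exact mul_le_mul_of_nonneg_right h3 (le_of_lt this)
      _ = K₂ * Real.exp (-(β / 2) * t ^ 2) := by rw [mul_assoc, hexpsplit]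
  -- the uniform bound on F'
  have hbnd_int : Integrable (fun a => K * Real.exp (-(β / 2) * (a - ctr) ^ 2)) volume :=
    ((integrable_exp_neg_mul_sq (half_pos hβ)).comp_sub_right ctr).const_mul K
  have h_bound : ∀ᵐ a, ∀ x ∈ Metric.ball x₀ ε,
      ‖(r a - α * Real.log (m x a) - α) * m' x a‖ ≤ K * Real.exp (-(β / 2) * (a - ctr) ^ 2) := by
    refine Filter.Eventually.of_forall fun a x hx => ?_
    set t := a - ctr with ht
    have h1 := hlogbd x hx a
    have h2 := hm'_le x hx a
    have h3 := polyExp (β := β) (C₁ := C₁) (C₂ := C₂) (D₁ := D₁) (D₂ := D₂) t hβ hC₁ hC₂ hD₁ hD₂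
    rw [Real.norm_eq_abs, abs_mul]
    calc |r a - α * Real.log (m x a) - α| * |m' x a|
        ≤ (C₁ + C₂ * t ^ 2) * ((D₁ + D₂ * t ^ 2) * Real.exp (-(β * t ^ 2))) :=
          mul_le_mul h1 h2 (abs_nonneg _) (by positivity)
      _ = (C₁ + C₂ * t ^ 2) * (D₁ + D₂ * t ^ 2) * Real.exp (-(β * t ^ 2)) := by ring
      _ ≤ K * Real.exp (β / 2 * t ^ 2) * Real.exp (-(β * t ^ 2)) :=
          mul_le_mul_of_nonneg_right h3 (le_of_lt (Real.exp_pos _))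
      _ = K * Real.exp (-(β / 2) * t ^ 2) := by rw [mul_assoc, hexpsplit]
  -- differentiability of the integrand
  have h_diff : ∀ᵐ a, ∀ x ∈ Metric.ball x₀ ε,
      HasDerivAt (fun y => (r a - α * Real.log (m y a)) * m y a)
        ((r a - α * Real.log (m x a) - α) * m' x a) x := by
    refine Filter.Eventually.of_forall fun a x hx => ?_
    have hpos := hm_pos x hx a
    have h1 : HasDerivAt (fun y => m y a) (m' x a) x := hm_deriv a x hx
    have hlog : HasDerivAt (fun y => Real.log (m y a)) (m' x a / m x a) x :=
      h1.log (ne_of_gt hpos)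
    have hc : HasDerivAt (fun y => r a - α * Real.log (m y a))
        (-(α * (m' x a / m x a))) x := (hlog.const_mul α).const_sub (r a)
    have hmul := hc.mul h1
    refine hmul.congr_deriv ?_
    rw [neg_mul, mul_assoc, div_mul_cancel₀ _ (ne_of_gt hpos)]
    ring
  exact (hasDerivAt_integral_of_dominated_loc_of_deriv_le (Metric.ball_mem_nhds x₀ hε)
    (Filter.Eventually.of_forall hFmeas) hFint hF'meas h_bound hbnd_int h_diff).2

lemma hasDerivAt_gpdf_mu (σ a : ℝ) (hσ : 0 < σ) (x : ℝ) :
    HasDerivAt (fun y => gpdf y σ a) ((a - x) / σ ^ 2 * gpdf x σ a) x := by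
  have h1 : HasDerivAt (fun y : ℝ => a - y) (-1) x := (hasDerivAt_id x).const_sub a
  have h2 : HasDerivAt (fun y : ℝ => (a - y) ^ 2) (2 * (a - x) ^ 1 * (-1)) x := h1.pow 2
  have h3 := ((h2.neg.div_const (2 * σ ^ 2)).exp).const_mul
    (Real.sqrt (2 * Real.pi * σ ^ 2))⁻¹
  simp only [Pi.neg_apply] at h3
  refine h3.congr_deriv ?_
  unfold gpdf
  have hσ2 : (σ:ℝ) ^ 2 ≠ 0 := by positivity
  field_simp

lemma caseA (r : ℝ → ℝ) (hr : Measurable r) {C : ℝ} (hbd : ∀ a, |r a| ≤ C) (α : ℝ)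
    {w v σ : ℝ} (μ : ℝ) (hw : 0 < w) (hv : 0 ≤ v) (hσ : 0 < σ) :
    HasDerivAt (fun x => ∫ a,
        (r a - α * Real.log (w * gpdf x σ a + v * gpdf μ σ a)) *
          (w * gpdf x σ a + v * gpdf μ σ a))
      (∫ a, (r a - α * Real.log ((w + v) * gpdf μ σ a) - α) *
          (w * ((a - μ) / σ ^ 2 * gpdf μ σ a))) μ := by
  set c : ℝ := (Real.sqrt (2 * Real.pi * σ ^ 2))⁻¹ with hc
  have hcpos : 0 < c := by
    rw [hc]
    have h : 0 < 2 * Real.pi * σ ^ 2 := by positivity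
    positivity
  have hσ2 : (0:ℝ) < σ ^ 2 := by positivity
  have key := core r hr hbd α
    (fun x a => w * gpdf x σ a + v * gpdf μ σ a)
    (fun x a => w * ((a - x) / σ ^ 2 * gpdf x σ a)) μ μ 1
    ((w + v) * c * Real.exp (1 / (2 * σ ^ 2)))   -- M
    (w * c * Real.exp (-(1 / σ ^ 2)))            -- L
    (1 / σ ^ 2)                                  -- γ
    (1 / (4 * σ ^ 2))                            -- β
    (w * c * Real.exp (1 / (2 * σ ^ 2)) / σ ^ 2 * (3 / 2))  -- D₁
    (w * c * Real.exp (1 / (2 * σ ^ 2)) / σ ^ 2 * (1 / 2))  -- D₂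
    one_pos (by positivity) (by positivity) (by positivity) (by positivity)
    (by positivity) (by positivity)
    (fun x => ((measurable_gpdf x σ).const_mul w).add ((measurable_gpdf μ σ).const_mul v))
    ((((measurable_id.sub measurable_const).div_const _).mul (measurable_gpdf μ σ)).const_mul w)
    ?hle ?hge ?hm'le ?hderiv
  · have hIeq : (∫ a, (r a - α * Real.log ((w + v) * gpdf μ σ a) - α) *
          (w * ((a - μ) / σ ^ 2 * gpdf μ σ a)))
        = ∫ a, (r a - α * Real.log (w * gpdf μ σ a + v * gpdf μ σ a) - α) *
          (w * ((a - μ) / σ ^ 2 * gpdf μ σ a)) := by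
      congr 1
      funext a
      rw [show w * gpdf μ σ a + v * gpdf μ σ a = (w + v) * gpdf μ σ a from by ring]
    rw [hIeq]
    exact key
  case hle =>
    intro x hx a
    have hd : |x - μ| < 1 := by simpa [Real.dist_eq] using hx
    have hd2 : (x - μ) ^ 2 ≤ 1 := by nlinarith [abs_nonneg (x - μ), sq_abs (x - μ)]
    have e1 : gpdf x σ a ≤ c * (Real.exp (1 / (2 * σ ^ 2)) * Real.exp (-(1 / (4 * σ ^ 2) * (a - μ) ^ 2))) := by
      unfold gpdf
      rw [← hc, ← Real.exp_add]
      refine mul_le_mul_of_nonneg_left (Real.exp_le_exp.mpr ?_) (le_of_lt hcpos)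
      rw [← sub_nonneg]
      have heq : 1 / (2 * σ ^ 2) + -(1 / (4 * σ ^ 2) * (a - μ) ^ 2) - -((a - x) ^ 2) / (2 * σ ^ 2)
          = (2 + 2 * (a - x) ^ 2 - (a - μ) ^ 2) / (4 * σ ^ 2) := by field_simp; ring
      rw [heq]
      apply div_nonneg _ (by positivity)
      nlinarith [sq_nonneg ((a - μ) - 2 * (x - μ))]
    have e2 : gpdf μ σ a ≤ c * (Real.exp (1 / (2 * σ ^ 2)) * Real.exp (-(1 / (4 * σ ^ 2) * (a - μ) ^ 2))) := by
      unfold gpdf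
      rw [← hc, ← Real.exp_add]
      refine mul_le_mul_of_nonneg_left (Real.exp_le_exp.mpr ?_) (le_of_lt hcpos)
      rw [← sub_nonneg]
      have heq : 1 / (2 * σ ^ 2) + -(1 / (4 * σ ^ 2) * (a - μ) ^ 2) - -((a - μ) ^ 2) / (2 * σ ^ 2)
          = (2 + 2 * (a - μ) ^ 2 - (a - μ) ^ 2) / (4 * σ ^ 2) := by field_simp; ring
      rw [heq]
      apply div_nonneg _ (by positivity)
      nlinarith [sq_nonneg (a - μ)]
    calc w * gpdf x σ a + v * gpdf μ σ a
        ≤ w * (c * (Real.exp (1 / (2 * σ ^ 2)) * Real.exp (-(1 / (4 * σ ^ 2) * (a - μ) ^ 2))))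
          + v * (c * (Real.exp (1 / (2 * σ ^ 2)) * Real.exp (-(1 / (4 * σ ^ 2) * (a - μ) ^ 2)))) :=
          add_le_add (mul_le_mul_of_nonneg_left e1 (le_of_lt hw))
            (mul_le_mul_of_nonneg_left e2 hv)
      _ = (w + v) * c * Real.exp (1 / (2 * σ ^ 2)) * Real.exp (-(1 / (4 * σ ^ 2) * (a - μ) ^ 2)) := by
          ring
  case hge =>
    intro x hx a
    have hd : |x - μ| < 1 := by simpa [Real.dist_eq] using hx
    have hd2 : (x - μ) ^ 2 ≤ 1 := by nlinarith [abs_nonneg (x - μ), sq_abs (x - μ)]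
    have e1 : c * (Real.exp (-(1 / σ ^ 2)) * Real.exp (-(1 / σ ^ 2 * (a - μ) ^ 2))) ≤ gpdf x σ a := by
      unfold gpdf
      rw [← hc, ← Real.exp_add]
      refine mul_le_mul_of_nonneg_left (Real.exp_le_exp.mpr ?_) (le_of_lt hcpos)
      rw [← sub_nonneg]
      have heq : -((a - x) ^ 2) / (2 * σ ^ 2) - (-(1 / σ ^ 2) + -(1 / σ ^ 2 * (a - μ) ^ 2))
          = (2 + 2 * (a - μ) ^ 2 - (a - x) ^ 2) / (2 * σ ^ 2) := by field_simp; ring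
      rw [heq]
      apply div_nonneg _ (by positivity)
      nlinarith [sq_nonneg ((a - μ) + (x - μ)), sq_nonneg ((a - μ) - (x - μ))]
    have h2 : 0 ≤ v * gpdf μ σ a := mul_nonneg hv (le_of_lt (gpdf_pos hσ μ a))
    calc w * c * Real.exp (-(1 / σ ^ 2)) * Real.exp (-(1 / σ ^ 2 * (a - μ) ^ 2))
        = w * (c * (Real.exp (-(1 / σ ^ 2)) * Real.exp (-(1 / σ ^ 2 * (a - μ) ^ 2)))) := by ring
      _ ≤ w * gpdf x σ a := mul_le_mul_of_nonneg_left e1 (le_of_lt hw)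
      _ ≤ w * gpdf x σ a + v * gpdf μ σ a := le_add_of_nonneg_right h2
  case hm'le =>
    intro x hx a
    have hd : |x - μ| < 1 := by simpa [Real.dist_eq] using hx
    have hd2 : (x - μ) ^ 2 ≤ 1 := by nlinarith [abs_nonneg (x - μ), sq_abs (x - μ)]
    have e1 : gpdf x σ a ≤ c * (Real.exp (1 / (2 * σ ^ 2)) * Real.exp (-(1 / (4 * σ ^ 2) * (a - μ) ^ 2))) := by
      unfold gpdf
      rw [← hc, ← Real.exp_add]
      refine mul_le_mul_of_nonneg_left (Real.exp_le_exp.mpr ?_) (le_of_lt hcpos)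
      rw [← sub_nonneg]
      have heq : 1 / (2 * σ ^ 2) + -(1 / (4 * σ ^ 2) * (a - μ) ^ 2) - -((a - x) ^ 2) / (2 * σ ^ 2)
          = (2 + 2 * (a - x) ^ 2 - (a - μ) ^ 2) / (4 * σ ^ 2) := by field_simp; ring
      rw [heq]
      apply div_nonneg _ (by positivity)
      nlinarith [sq_nonneg ((a - μ) - 2 * (x - μ))]
    have habs : |a - x| ≤ |a - μ| + 1 := by
      calc |a - x| = |(a - μ) - (x - μ)| := by ring_nf
        _ ≤ |a - μ| + |x - μ| := abs_sub _ _
        _ ≤ |a - μ| + 1 := by linarith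
    have hgpos := gpdf_pos hσ x a
    have hstep1 : |w * ((a - x) / σ ^ 2 * gpdf x σ a)|
        = w * (|a - x| / σ ^ 2 * gpdf x σ a) := by
      rw [abs_mul, abs_mul, abs_div, abs_of_pos hw, abs_of_pos hgpos, abs_of_pos hσ2]
    rw [hstep1]
    have htabs : |a - μ| + 1 ≤ 3 / 2 + (a - μ) ^ 2 / 2 := by
      nlinarith [sq_nonneg (|a - μ| - 1), sq_abs (a - μ), abs_nonneg (a - μ)]
    calc w * (|a - x| / σ ^ 2 * gpdf x σ a)
        ≤ w * ((|a - μ| + 1) / σ ^ 2 *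
            (c * (Real.exp (1 / (2 * σ ^ 2)) * Real.exp (-(1 / (4 * σ ^ 2) * (a - μ) ^ 2))))) := by
          gcongr
      _ = (|a - μ| + 1) * (w * c * Real.exp (1 / (2 * σ ^ 2)) / σ ^ 2 *
            Real.exp (-(1 / (4 * σ ^ 2) * (a - μ) ^ 2))) := by ring
      _ ≤ (3 / 2 + (a - μ) ^ 2 / 2) * (w * c * Real.exp (1 / (2 * σ ^ 2)) / σ ^ 2 *
            Real.exp (-(1 / (4 * σ ^ 2) * (a - μ) ^ 2))) :=
          mul_le_mul_of_nonneg_right htabs (by positivity)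
      _ = (w * c * Real.exp (1 / (2 * σ ^ 2)) / σ ^ 2 * (3 / 2)
            + w * c * Real.exp (1 / (2 * σ ^ 2)) / σ ^ 2 * (1 / 2) * (a - μ) ^ 2) *
          Real.exp (-(1 / (4 * σ ^ 2) * (a - μ) ^ 2)) := by ring
  case hderiv =>
    intro a x hx
    have h1 := (hasDerivAt_gpdf_mu σ a hσ x).const_mul w
    exact h1.add_const (v * gpdf μ σ a)

lemma gpdf_eq {x : ℝ} (hx : 0 < x) (μ a : ℝ) :
    gpdf μ x a = (Real.sqrt (2 * Real.pi) * x)⁻¹ * Real.exp (-((a - μ) ^ 2) / (2 * x ^ 2)) := by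
  unfold gpdf
  rw [Real.sqrt_mul (by positivity) (x ^ 2), Real.sqrt_sq (le_of_lt hx)]

lemma hasDerivAt_gpdf_sigma (μ a : ℝ) {x : ℝ} (hx : 0 < x) :
    HasDerivAt (fun y => gpdf μ y a)
      (((a - μ) ^ 2 / x ^ 3 - 1 / x) * gpdf μ x a) x := by
  set s : ℝ := Real.sqrt (2 * Real.pi) with hsdef
  have hs : 0 < s := Real.sqrt_pos.mpr (by positivity)
  have hxne : x ≠ 0 := ne_of_gt hx
  have h1 : HasDerivAt (fun y : ℝ => y ^ 2) (2 * x) x := by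
    simpa using hasDerivAt_pow 2 x
  have h2 : HasDerivAt (fun y : ℝ => (y ^ 2)⁻¹) (-(2 * x) / (x ^ 2) ^ 2) x :=
    h1.inv (pow_ne_zero 2 hxne)
  have h3 : HasDerivAt (fun y : ℝ => -((a - μ) ^ 2) / 2 * (y ^ 2)⁻¹)
      (-((a - μ) ^ 2) / 2 * (-(2 * x) / (x ^ 2) ^ 2)) x := h2.const_mul _
  have h4 : HasDerivAt (fun y : ℝ => Real.exp (-((a - μ) ^ 2) / 2 * (y ^ 2)⁻¹))
      (Real.exp (-((a - μ) ^ 2) / 2 * (x ^ 2)⁻¹) *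
        (-((a - μ) ^ 2) / 2 * (-(2 * x) / (x ^ 2) ^ 2))) x := h3.exp
  have h5 : HasDerivAt (fun y : ℝ => (s * y)⁻¹) (-(s * 1) / (s * x) ^ 2) x := by
    have h := ((hasDerivAt_id x).const_mul s).inv
      (show s * id x ≠ 0 by simp only [id]; positivity)
    exact h
  have h6 := h5.mul h4
  have hev : (fun y => gpdf μ y a)
      =ᶠ[nhds x] fun y => (s * y)⁻¹ * Real.exp (-((a - μ) ^ 2) / 2 * (y ^ 2)⁻¹) := by
    filter_upwards [eventually_gt_nhds hx] with y hy
    rw [gpdf_eq hy, show -((a - μ) ^ 2) / (2 * y ^ 2) = -((a - μ) ^ 2) / 2 * (y ^ 2)⁻¹ from by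
      ring]
  refine HasDerivAt.congr_of_eventuallyEq ?_ hev
  refine h6.congr_deriv ?_
  rw [gpdf_eq hx, show -((a - μ) ^ 2) / (2 * x ^ 2) = -((a - μ) ^ 2) / 2 * (x ^ 2)⁻¹ from by ring,
    ← hsdef]
  have hsne : s ≠ 0 := ne_of_gt hs
  clear_value s
  field_simp
  ring

lemma caseB (r : ℝ → ℝ) (hr : Measurable r) {C : ℝ} (hbd : ∀ a, |r a| ≤ C) (α : ℝ)
    {w v σ : ℝ} (μ : ℝ) (hw : 0 < w) (hv : 0 ≤ v) (hσ : 0 < σ) :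
    HasDerivAt (fun x => ∫ a,
        (r a - α * Real.log (w * gpdf μ x a + v * gpdf μ σ a)) *
          (w * gpdf μ x a + v * gpdf μ σ a))
      (∫ a, (r a - α * Real.log ((w + v) * gpdf μ σ a) - α) *
          (w * (((a - μ) ^ 2 / σ ^ 3 - 1 / σ) * gpdf μ σ a))) σ := by
  set s : ℝ := Real.sqrt (2 * Real.pi) with hsdef
  have hs : 0 < s := Real.sqrt_pos.mpr (by positivity)
  set c : ℝ := (Real.sqrt (2 * Real.pi * σ ^ 2))⁻¹ with hc
  have hcpos : 0 < c := by
    rw [hc]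
    have h : 0 < 2 * Real.pi * σ ^ 2 := by positivity
    positivity
  have hball : ∀ x ∈ Metric.ball σ (σ / 2), σ / 2 < x ∧ x < 3 * σ / 2 ∧ 0 < x := by
    intro x hx
    have hd : |x - σ| < σ / 2 := by simpa [Real.dist_eq] using hx
    obtain ⟨h1, h2⟩ := abs_lt.mp hd
    exact ⟨by linarith, by linarith, by linarith⟩
  have key := core r hr hbd α
    (fun x a => w * gpdf μ x a + v * gpdf μ σ a)
    (fun x a => w * (((a - μ) ^ 2 / x ^ 3 - 1 / x) * gpdf μ x a)) σ μ (σ / 2)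
    (w * (s * (σ / 2))⁻¹ + v * c)                 -- M
    (w * (s * (3 * σ / 2))⁻¹)                     -- L
    (2 / σ ^ 2)                                   -- γ
    (2 / (9 * σ ^ 2))                             -- β
    (w * (s * (σ / 2))⁻¹ * (2 / σ))               -- D₁
    (w * (s * (σ / 2))⁻¹ * (8 / σ ^ 3))           -- D₂
    (by positivity) (by positivity) (by positivity) (by positivity) (by positivity)
    (by positivity) (by positivity)
    (fun x => ((measurable_gpdf μ x).const_mul w).add ((measurable_gpdf μ σ).const_mul v))
    (((((measurable_id.sub measurable_const).pow_const 2).div_const _).sub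
      measurable_const).mul (measurable_gpdf μ σ) |>.const_mul w)
    ?hle ?hge ?hm'le ?hderiv
  · have hIeq : (∫ a, (r a - α * Real.log ((w + v) * gpdf μ σ a) - α) *
          (w * (((a - μ) ^ 2 / σ ^ 3 - 1 / σ) * gpdf μ σ a)))
        = ∫ a, (r a - α * Real.log (w * gpdf μ σ a + v * gpdf μ σ a) - α) *
          (w * (((a - μ) ^ 2 / σ ^ 3 - 1 / σ) * gpdf μ σ a)) := by
      congr 1
      funext a
      rw [show w * gpdf μ σ a + v * gpdf μ σ a = (w + v) * gpdf μ σ a from by ring]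
    rw [hIeq]
    exact key
  case hle =>
    intro x hx a
    obtain ⟨hx1, hx2, hx0⟩ := hball x hx
    have e1 : gpdf μ x a ≤ (s * (σ / 2))⁻¹ * Real.exp (-(2 / (9 * σ ^ 2) * (a - μ) ^ 2)) := by
      rw [gpdf_eq hx0]
      refine mul_le_mul ?_ (Real.exp_le_exp.mpr ?_) (le_of_lt (Real.exp_pos _)) (by positivity)
      · exact inv_anti₀ (by positivity) (by nlinarith)
      · rw [← sub_nonneg]
        have heq : -(2 / (9 * σ ^ 2) * (a - μ) ^ 2) - -((a - μ) ^ 2) / (2 * x ^ 2)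
            = (a - μ) ^ 2 * (9 * σ ^ 2 - 4 * x ^ 2) / (18 * σ ^ 2 * x ^ 2) := by
          field_simp; ring
        rw [heq]
        exact div_nonneg (mul_nonneg (sq_nonneg _) (by nlinarith)) (by positivity)
    have e2 : gpdf μ σ a ≤ c * Real.exp (-(2 / (9 * σ ^ 2) * (a - μ) ^ 2)) := by
      unfold gpdf
      rw [← hc]
      refine mul_le_mul_of_nonneg_left (Real.exp_le_exp.mpr ?_) (le_of_lt hcpos)
      rw [← sub_nonneg]
      have heq : -(2 / (9 * σ ^ 2) * (a - μ) ^ 2) - -((a - μ) ^ 2) / (2 * σ ^ 2)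
          = (a - μ) ^ 2 * 5 / (18 * σ ^ 2) := by field_simp; ring
      rw [heq]
      positivity
    calc w * gpdf μ x a + v * gpdf μ σ a
        ≤ w * ((s * (σ / 2))⁻¹ * Real.exp (-(2 / (9 * σ ^ 2) * (a - μ) ^ 2)))
          + v * (c * Real.exp (-(2 / (9 * σ ^ 2) * (a - μ) ^ 2))) :=
          add_le_add (mul_le_mul_of_nonneg_left e1 (le_of_lt hw))
            (mul_le_mul_of_nonneg_left e2 hv)
      _ = (w * (s * (σ / 2))⁻¹ + v * c) * Real.exp (-(2 / (9 * σ ^ 2) * (a - μ) ^ 2)) := by ring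
  case hge =>
    intro x hx a
    obtain ⟨hx1, hx2, hx0⟩ := hball x hx
    have e1 : (s * (3 * σ / 2))⁻¹ * Real.exp (-(2 / σ ^ 2 * (a - μ) ^ 2)) ≤ gpdf μ x a := by
      rw [gpdf_eq hx0]
      refine mul_le_mul ?_ (Real.exp_le_exp.mpr ?_) (le_of_lt (Real.exp_pos _)) (by positivity)
      · exact inv_anti₀ (by positivity) (by nlinarith)
      · rw [← sub_nonneg]
        have heq : -((a - μ) ^ 2) / (2 * x ^ 2) - -(2 / σ ^ 2 * (a - μ) ^ 2)
            = (a - μ) ^ 2 * (4 * x ^ 2 - σ ^ 2) / (2 * σ ^ 2 * x ^ 2) := by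
          field_simp; ring
        rw [heq]
        exact div_nonneg (mul_nonneg (sq_nonneg _) (by nlinarith)) (by positivity)
    have h2 : 0 ≤ v * gpdf μ σ a := mul_nonneg hv (le_of_lt (gpdf_pos hσ μ a))
    calc w * (s * (3 * σ / 2))⁻¹ * Real.exp (-(2 / σ ^ 2 * (a - μ) ^ 2))
        = w * ((s * (3 * σ / 2))⁻¹ * Real.exp (-(2 / σ ^ 2 * (a - μ) ^ 2))) := by ring
      _ ≤ w * gpdf μ x a := mul_le_mul_of_nonneg_left e1 (le_of_lt hw)
      _ ≤ w * gpdf μ x a + v * gpdf μ σ a := le_add_of_nonneg_right h2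
  case hm'le =>
    intro x hx a
    obtain ⟨hx1, hx2, hx0⟩ := hball x hx
    have e1 : gpdf μ x a ≤ (s * (σ / 2))⁻¹ * Real.exp (-(2 / (9 * σ ^ 2) * (a - μ) ^ 2)) := by
      rw [gpdf_eq hx0]
      refine mul_le_mul ?_ (Real.exp_le_exp.mpr ?_) (le_of_lt (Real.exp_pos _)) (by positivity)
      · exact inv_anti₀ (by positivity) (by nlinarith)
      · rw [← sub_nonneg]
        have heq : -(2 / (9 * σ ^ 2) * (a - μ) ^ 2) - -((a - μ) ^ 2) / (2 * x ^ 2)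
            = (a - μ) ^ 2 * (9 * σ ^ 2 - 4 * x ^ 2) / (18 * σ ^ 2 * x ^ 2) := by
          field_simp; ring
        rw [heq]
        exact div_nonneg (mul_nonneg (sq_nonneg _) (by nlinarith)) (by positivity)
    have hx3 : σ ^ 3 / 8 ≤ x ^ 3 := by nlinarith [sq_nonneg (x + σ / 2), sq_nonneg (x - σ / 2)]
    have habs : |(a - μ) ^ 2 / x ^ 3 - 1 / x| ≤ 8 / σ ^ 3 * (a - μ) ^ 2 + 2 / σ := by
      have h1 : |(a - μ) ^ 2 / x ^ 3 - 1 / x| ≤ |(a - μ) ^ 2 / x ^ 3| + |1 / x| := abs_sub _ _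
      have h2 : |(a - μ) ^ 2 / x ^ 3| = (a - μ) ^ 2 / x ^ 3 := abs_of_nonneg (by positivity)
      have h3 : |1 / x| = 1 / x := abs_of_nonneg (by positivity)
      have h4 : (a - μ) ^ 2 / x ^ 3 ≤ (a - μ) ^ 2 / (σ ^ 3 / 8) :=
        div_le_div_of_nonneg_left (sq_nonneg _) (by positivity) hx3
      have h5 : 1 / x ≤ 1 / (σ / 2) := by
        apply div_le_div_of_nonneg_left one_pos.le (by positivity) hx1.le
      have h6 : (a - μ) ^ 2 / (σ ^ 3 / 8) = 8 / σ ^ 3 * (a - μ) ^ 2 := by ring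
      have h7 : 1 / (σ / 2) = 2 / σ := by ring
      rw [h2, h3] at h1
      linarith [h1, h4.trans_eq h6, h5.trans_eq h7]
    have hgpos := gpdf_pos hx0 μ a
    have hstep1 : |w * (((a - μ) ^ 2 / x ^ 3 - 1 / x) * gpdf μ x a)|
        = w * (|(a - μ) ^ 2 / x ^ 3 - 1 / x| * gpdf μ x a) := by
      rw [abs_mul, abs_mul, abs_of_pos hw, abs_of_pos hgpos]
    rw [hstep1]
    calc w * (|(a - μ) ^ 2 / x ^ 3 - 1 / x| * gpdf μ x a)
        ≤ w * ((8 / σ ^ 3 * (a - μ) ^ 2 + 2 / σ) *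
            ((s * (σ / 2))⁻¹ * Real.exp (-(2 / (9 * σ ^ 2) * (a - μ) ^ 2)))) := by
          gcongr
      _ = (w * (s * (σ / 2))⁻¹ * (2 / σ) + w * (s * (σ / 2))⁻¹ * (8 / σ ^ 3) * (a - μ) ^ 2) *
            Real.exp (-(2 / (9 * σ ^ 2) * (a - μ) ^ 2)) := by ring
  case hderiv =>
    intro a x hx
    obtain ⟨hx1, hx2, hx0⟩ := hball x hx
    have h1 := (hasDerivAt_gpdf_sigma μ a hx0).const_mul w
    exact h1.add_const (v * gpdf μ σ a)

lemma softmax_sum {N : ℕ} (hN : 1 ≤ N) (η : Fin N → ℝ) : ∑ k, softmaxW η k = 1 := by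
  have : Nonempty (Fin N) := ⟨⟨0, hN⟩⟩
  unfold softmaxW
  rw [← Finset.sum_div]
  apply div_self
  have h : 0 < ∑ j, Real.exp (η j) :=
    Finset.sum_pos (fun j _ => Real.exp_pos (η j)) Finset.univ_nonempty
  exact ne_of_gt h

lemma softmax_zero {N : ℕ} (hN : 1 ≤ N) (k : Fin N) :
    softmaxW (fun _ => (0:ℝ)) k = 1 / (N : ℝ) := by
  unfold softmaxW
  simp [Real.exp_zero]

lemma mixD_mu {N : ℕ} (hN : 1 ≤ N) (k : Fin N) (x μ σ a : ℝ) :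
    mixDensity (Function.update (fun _ => μ) k x) (fun _ => σ) (fun _ => (0:ℝ)) a
      = 1 / (N : ℝ) * gpdf x σ a + (1 - 1 / (N : ℝ)) * gpdf μ σ a := by
  have hNne : (N : ℝ) ≠ 0 := Nat.cast_ne_zero.mpr (by omega)
  unfold mixDensity
  have hsummand : ∀ j, softmaxW (fun _ => (0:ℝ)) j * gpdf (Function.update (fun _ => μ) k x j) σ a
      = Function.update (fun _ : Fin N => 1 / (N:ℝ) * gpdf μ σ a) k (1 / (N:ℝ) * gpdf x σ a) j := by
    intro j
    rw [softmax_zero hN]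
    rcases eq_or_ne j k with h | h
    · subst h
      rw [Function.update_self, Function.update_self]
    · rw [Function.update_of_ne h, Function.update_of_ne h]
  rw [Finset.sum_congr rfl (fun j _ => hsummand j),
    Finset.sum_update_of_mem (Finset.mem_univ k), Finset.sum_const]
  have hcard : (Finset.univ \ {k}).card = N - 1 := by
    rw [Finset.card_sdiff_of_subset (Finset.singleton_subset_iff.mpr (Finset.mem_univ k)),
      Finset.card_singleton, Finset.card_univ, Fintype.card_fin]
  rw [hcard, nsmul_eq_mul, Nat.cast_sub hN, Nat.cast_one]
  field_simp

lemma mixD_sigma {N : ℕ} (hN : 1 ≤ N) (k : Fin N) (x μ σ a : ℝ) :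
    mixDensity (fun _ => μ) (Function.update (fun _ => σ) k x) (fun _ => (0:ℝ)) a
      = 1 / (N : ℝ) * gpdf μ x a + (1 - 1 / (N : ℝ)) * gpdf μ σ a := by
  have hNne : (N : ℝ) ≠ 0 := Nat.cast_ne_zero.mpr (by omega)
  unfold mixDensity
  have hsummand : ∀ j, softmaxW (fun _ => (0:ℝ)) j * gpdf μ (Function.update (fun _ => σ) k x j) a
      = Function.update (fun _ : Fin N => 1 / (N:ℝ) * gpdf μ σ a) k (1 / (N:ℝ) * gpdf μ x a) j := by
    intro j
    rw [softmax_zero hN]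
    rcases eq_or_ne j k with h | h
    · subst h
      rw [Function.update_self, Function.update_self]
    · rw [Function.update_of_ne h, Function.update_of_ne h]
  rw [Finset.sum_congr rfl (fun j _ => hsummand j),
    Finset.sum_update_of_mem (Finset.mem_univ k), Finset.sum_const]
  have hcard : (Finset.univ \ {k}).card = N - 1 := by
    rw [Finset.card_sdiff_of_subset (Finset.singleton_subset_iff.mpr (Finset.mem_univ k)),
      Finset.card_singleton, Finset.card_univ, Fintype.card_fin]
  rw [hcard, nsmul_eq_mul, Nat.cast_sub hN, Nat.cast_one]
  field_simp

lemma mixD_eta {N : ℕ} (hN : 1 ≤ N) (η : Fin N → ℝ) (μ σ a : ℝ) :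
    mixDensity (fun _ => μ) (fun _ => σ) η a = gpdf μ σ a := by
  unfold mixDensity
  rw [← Finset.sum_mul, softmax_sum hN, one_mul]

lemma statB_to_statM (r : ℝ → ℝ) (hmeas : Measurable r) {C : ℝ} (hbd : ∀ a, |r a| ≤ C)
    (α : ℝ) {N : ℕ} (hN : 1 ≤ N) {μ σ : ℝ} (h : IsStatB r α μ σ) :
    IsStatM r α (fun _ : Fin N => μ) (fun _ => σ) (fun _ => 0) := by
  obtain ⟨hσ, ⟨hdμ, hderμ⟩, ⟨hdσ, hderσ⟩⟩ := h
  have hNpos : (0 : ℝ) < N := by exact_mod_cast Nat.lt_of_lt_of_le Nat.zero_lt_one hN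
  have hNne : (N : ℝ) ≠ 0 := ne_of_gt hNpos
  -- Gaussian partials as explicit integrals
  have hA1 := caseA r hmeas hbd α μ one_pos le_rfl hσ
  have hfun1 : (fun x => ∫ a,
      (r a - α * Real.log (1 * gpdf x σ a + 0 * gpdf μ σ a)) *
        (1 * gpdf x σ a + 0 * gpdf μ σ a)) = fun x => Jb r α x σ := by
    funext x; unfold Jb; norm_num
  rw [hfun1] at hA1
  have hIμ : (∫ a, (r a - α * Real.log ((1 + 0) * gpdf μ σ a) - α) *
      (1 * ((a - μ) / σ ^ 2 * gpdf μ σ a))) = 0 := by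
    rw [← hA1.deriv]; exact hderμ
  have hB1 := caseB r hmeas hbd α μ one_pos le_rfl hσ
  have hfun2 : (fun x => ∫ a,
      (r a - α * Real.log (1 * gpdf μ x a + 0 * gpdf μ σ a)) *
        (1 * gpdf μ x a + 0 * gpdf μ σ a)) = fun x => Jb r α μ x := by
    funext x; unfold Jb; norm_num
  rw [hfun2] at hB1
  have hIσ : (∫ a, (r a - α * Real.log ((1 + 0) * gpdf μ σ a) - α) *
      (1 * (((a - μ) ^ 2 / σ ^ 3 - 1 / σ) * gpdf μ σ a))) = 0 := by
    rw [← hB1.deriv]; exact hderσ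
  refine ⟨fun _ => hσ, fun k => ?_⟩
  have hw : (0 : ℝ) < 1 / N := by positivity
  have hv : (0 : ℝ) ≤ 1 - 1 / N := by
    rw [sub_nonneg, div_le_one hNpos]
    exact_mod_cast hN
  refine ⟨?_, ?_, ?_⟩
  · -- μ-partial
    have hA2 := caseA r hmeas hbd α μ hw hv hσ
    have hfun : (fun x => ∫ a,
        (r a - α * Real.log (1 / (N:ℝ) * gpdf x σ a + (1 - 1 / (N:ℝ)) * gpdf μ σ a)) *
          (1 / (N:ℝ) * gpdf x σ a + (1 - 1 / (N:ℝ)) * gpdf μ σ a))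
        = fun x => Jm r α (Function.update (fun _ : Fin N => μ) k x) (fun _ => σ) (fun _ => 0) := by
      funext x
      unfold Jm
      congr 1
      funext a
      rw [mixD_mu hN k]
    rw [hfun] at hA2
    have hval : (∫ a, (r a - α * Real.log ((1 / (N:ℝ) + (1 - 1 / (N:ℝ))) * gpdf μ σ a) - α) *
        (1 / (N:ℝ) * ((a - μ) / σ ^ 2 * gpdf μ σ a))) = 0 := by
      have h1 : (fun a => (r a - α * Real.log ((1 / (N:ℝ) + (1 - 1 / (N:ℝ))) * gpdf μ σ a) - α) *
          (1 / (N:ℝ) * ((a - μ) / σ ^ 2 * gpdf μ σ a)))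
          = fun a => 1 / (N:ℝ) * ((r a - α * Real.log ((1 + 0) * gpdf μ σ a) - α) *
            (1 * ((a - μ) / σ ^ 2 * gpdf μ σ a))) := by
        funext a
        rw [show (1 / (N:ℝ) + (1 - 1 / (N:ℝ))) = 1 + 0 from by ring]
        ring
      rw [h1, MeasureTheory.integral_const_mul, hIμ, mul_zero]
    rw [hval] at hA2
    exact ⟨hA2.differentiableAt, hA2.deriv⟩
  · -- σ-partial
    have hB2 := caseB r hmeas hbd α μ hw hv hσ
    have hfun : (fun x => ∫ a,
        (r a - α * Real.log (1 / (N:ℝ) * gpdf μ x a + (1 - 1 / (N:ℝ)) * gpdf μ σ a)) *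
          (1 / (N:ℝ) * gpdf μ x a + (1 - 1 / (N:ℝ)) * gpdf μ σ a))
        = fun x => Jm r α (fun _ : Fin N => μ) (Function.update (fun _ => σ) k x) (fun _ => 0) := by
      funext x
      unfold Jm
      congr 1
      funext a
      rw [mixD_sigma hN k]
    rw [hfun] at hB2
    have hval : (∫ a, (r a - α * Real.log ((1 / (N:ℝ) + (1 - 1 / (N:ℝ))) * gpdf μ σ a) - α) *
        (1 / (N:ℝ) * (((a - μ) ^ 2 / σ ^ 3 - 1 / σ) * gpdf μ σ a))) = 0 := by
      have h1 : (fun a => (r a - α * Real.log ((1 / (N:ℝ) + (1 - 1 / (N:ℝ))) * gpdf μ σ a) - α) *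
          (1 / (N:ℝ) * (((a - μ) ^ 2 / σ ^ 3 - 1 / σ) * gpdf μ σ a)))
          = fun a => 1 / (N:ℝ) * ((r a - α * Real.log ((1 + 0) * gpdf μ σ a) - α) *
            (1 * (((a - μ) ^ 2 / σ ^ 3 - 1 / σ) * gpdf μ σ a))) := by
        funext a
        rw [show (1 / (N:ℝ) + (1 - 1 / (N:ℝ))) = 1 + 0 from by ring]
        ring
      rw [h1, MeasureTheory.integral_const_mul, hIσ, mul_zero]
    rw [hval] at hB2
    exact ⟨hB2.differentiableAt, hB2.deriv⟩
  · -- η-partial: the objective is constant in η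
    have hfun : (fun x => Jm r α (fun _ : Fin N => μ) (fun _ => σ)
        (Function.update (fun _ => (0:ℝ)) k x))
        = fun _ => ∫ a, (r a - α * Real.log (gpdf μ σ a)) * gpdf μ σ a := by
      funext x
      unfold Jm
      congr 1
      funext a
      rw [mixD_eta hN]
    rw [hfun]
    exact ⟨differentiableAt_const _, deriv_const _ _⟩

/-- the set of entropy scales `α` at which the mixture objective
has no stationary point is contained in the corresponding set for the Gaussian
objective; consequently, if the former is nonempty, its infimum is at least
that of the latter. -/
theorem stmt6 (r : ℝ → ℝ) (hmeas : Measurable r) (C : ℝ) (hbd : ∀ a, |r a| ≤ C)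
    (N : ℕ) (hN : 1 ≤ N) :
    {α : ℝ | 0 < α ∧ ¬ ∃ μs σs η : Fin N → ℝ, IsStatM r α μs σs η} ⊆
      {α : ℝ | 0 < α ∧ ¬ ∃ μ σ : ℝ, IsStatB r α μ σ} ∧
    ({α : ℝ | 0 < α ∧ ¬ ∃ μs σs η : Fin N → ℝ, IsStatM r α μs σs η}.Nonempty →
      sInf {α : ℝ | 0 < α ∧ ¬ ∃ μ σ : ℝ, IsStatB r α μ σ} ≤
        sInf {α : ℝ | 0 < α ∧ ¬ ∃ μs σs η : Fin N → ℝ, IsStatM r α μs σs η}) := by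
  have hsub : {α : ℝ | 0 < α ∧ ¬ ∃ μs σs η : Fin N → ℝ, IsStatM r α μs σs η} ⊆
      {α : ℝ | 0 < α ∧ ¬ ∃ μ σ : ℝ, IsStatB r α μ σ} := by
    rintro α ⟨hα, hm⟩
    refine ⟨hα, fun hb => hm ?_⟩
    obtain ⟨μ, σ, hs⟩ := hb
    exact ⟨fun _ => μ, fun _ => σ, fun _ => 0, statB_to_statM r hmeas hbd α hN hs⟩
  refine ⟨hsub, fun hne => ?_⟩
  exact csInf_le_csInf ⟨0, fun x hx => le_of_lt hx.1⟩ hne hsub
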